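/- (Main Theorem) For every natural number c there exists a constant C = C(c), independent of n, such that for all n and all c-quasihomomorphisms f: Z -> Q^n (Q the rationals), w_H(f(x) - x*f(1)) <= C for all x in Z. Moreover one can take C = 28*c. -/

import Mathlib

open Finset

/-- Hamming weight: number of nonzero coordinates. -/
noncomputable def wH {Q : Type*} [Zero Q] {n : ℕ} (v : Fin n → Q) : ℕ :=
  Nat.card {i : Fin n // v i ≠ 0}

private lemma percoord (g : ℤ → ℚ) (x X N : ℤ) (hX : 1 ≤ X) (hxX : |x| ≤ X)
    (hN : N = 1000 * X)
    (HA : 16 * (((Finset.Ico (N - 2*X) (2*N + 2*X) ×ˢ Finset.Ico (N - 2*X) (2*N + 2*X)).filter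
        (fun p => g (p.1 + p.2) - g p.1 - g p.2 ≠ 0)).card : ℤ) ≤ (N + 4*X)^2)
    (H1 : 2 * (((Finset.Ico N (2*N)).filter fun y => g (y + 1) - g y - g 1 ≠ 0).card : ℤ) ≤ N)
    (Hx : 2 * (((Finset.Ico N (2*N)).filter fun y => g (y + x) - g y - g x ≠ 0).card : ℤ) ≤ N)
    (hg1 : g 1 = 0) : g x = 0 := by
  classical
  set I : Finset ℤ := Finset.Ico N (2*N) with hI
  set J : Finset ℤ := Finset.Ico (N - 2*X) (2*N + 2*X) with hJ
  set cA : ℤ := (((J ×ˢ J).filter (fun p => g (p.1 + p.2) - g p.1 - g p.2 ≠ 0)).card : ℤ) with hcA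
  have hXpos : (0:ℤ) < X := hX
  have hcA0 : 0 ≤ cA := Int.natCast_nonneg _
  have hIcard : (I.card : ℤ) = N := by
    rw [hI, Int.card_Ico_of_le N (2*N) (by omega)]; ring
  have hJcard : (J.card : ℤ) = N + 4*X := by
    rw [hJ, Int.card_Ico_of_le (N - 2*X) (2*N + 2*X) (by omega)]; ring
  have hM2 : (N + 4*X)^2 = 1008016 * X^2 := by rw [hN]; ring
  have hcAbound : 2 * cA ≤ 126002 * X^2 := by
    have := HA; rw [hM2] at this; linarith
  -- membership helpers
  have hIJ : ∀ t y : ℤ, |t| ≤ 2*X → y ∈ I → t + y ∈ J := by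
    intro t y ht hy
    rw [hI, Finset.mem_Ico] at hy
    rw [hJ, Finset.mem_Ico]
    rw [abs_le] at ht
    omega
  have hIsubJ : ∀ y, y ∈ I → y ∈ J := by
    intro y hy
    have := hIJ 0 y (by rw [abs_zero]; omega) hy
    simpa using this
  -- cross counting lemma
  have cross : ∀ t1 t2 : ℤ, |t1| ≤ X → |t2| ≤ X →
      ((((I ×ˢ I).filter fun p : ℤ×ℤ =>
        g (t1 + (t2 + p.1)) - g (t2 + p.1) ≠ g (t1 + p.2) - g p.2).card : ℤ)) ≤ 2 * cA := by
    intro t1 t2 h1 h2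
    have habs1 : |t1| ≤ 2*X := by rw [abs_le] at h1 ⊢; omega
    have habs2 : |t2| ≤ 2*X := by rw [abs_le] at h2 ⊢; omega
    have habs12 : |t1 + t2| ≤ 2*X := by rw [abs_le] at h1 h2 ⊢; omega
    have hsub : (I ×ˢ I).filter (fun p : ℤ×ℤ =>
          g (t1 + (t2 + p.1)) - g (t2 + p.1) ≠ g (t1 + p.2) - g p.2)
        ⊆ ((I ×ˢ I).filter (fun p : ℤ×ℤ =>
            g ((t2 + p.1) + (t1 + p.2)) - g (t2 + p.1) - g (t1 + p.2) ≠ 0))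
          ∪ ((I ×ˢ I).filter (fun p : ℤ×ℤ =>
            g (p.2 + (t1 + (t2 + p.1))) - g p.2 - g (t1 + (t2 + p.1)) ≠ 0)) := by
      intro p hp
      rw [mem_filter] at hp
      by_cases hP1 : g ((t2 + p.1) + (t1 + p.2)) - g (t2 + p.1) - g (t1 + p.2) ≠ 0
      · exact mem_union_left _ (mem_filter.mpr ⟨hp.1, hP1⟩)
      by_cases hP2 : g (p.2 + (t1 + (t2 + p.1))) - g p.2 - g (t1 + (t2 + p.1)) ≠ 0
      · exact mem_union_right _ (mem_filter.mpr ⟨hp.1, hP2⟩)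
      exfalso
      apply hp.2
      rw [not_not] at hP1 hP2
      have harg : (t2 + p.1) + (t1 + p.2) = p.2 + (t1 + (t2 + p.1)) := by ring
      rw [harg] at hP1
      linarith
    have hc1 : ((I ×ˢ I).filter (fun p : ℤ×ℤ =>
        g ((t2 + p.1) + (t1 + p.2)) - g (t2 + p.1) - g (t1 + p.2) ≠ 0)).card
        ≤ ((J ×ˢ J).filter (fun p => g (p.1 + p.2) - g p.1 - g p.2 ≠ 0)).card := by
      apply Finset.card_le_card_of_injOn (fun p => (t2 + p.1, t1 + p.2))
      · intro p hp
        rw [mem_coe, mem_filter, mem_product] at hp ⊢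
        exact ⟨⟨hIJ t2 p.1 habs2 hp.1.1, hIJ t1 p.2 habs1 hp.1.2⟩, hp.2⟩
      · intro p _ q _ h
        rw [Prod.mk.injEq] at h
        exact Prod.ext (by omega) (by omega)
    have hc2 : ((I ×ˢ I).filter (fun p : ℤ×ℤ =>
        g (p.2 + (t1 + (t2 + p.1))) - g p.2 - g (t1 + (t2 + p.1)) ≠ 0)).card
        ≤ ((J ×ˢ J).filter (fun p => g (p.1 + p.2) - g p.1 - g p.2 ≠ 0)).card := by
      apply Finset.card_le_card_of_injOn (fun p => (p.2, t1 + (t2 + p.1)))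
      · intro p hp
        rw [mem_coe, mem_filter, mem_product] at hp ⊢
        refine ⟨⟨hIsubJ p.2 hp.1.2, ?_⟩, hp.2⟩
        have : (t1 + t2) + p.1 ∈ J := hIJ (t1 + t2) p.1 habs12 hp.1.1
        show t1 + (t2 + p.1) ∈ J
        rwa [show t1 + (t2 + p.1) = (t1 + t2) + p.1 by ring]
      · intro p _ q _ h
        rw [Prod.mk.injEq] at h
        exact Prod.ext (by omega) (by omega)
    have := le_trans (Finset.card_le_card hsub) (Finset.card_union_le _ _)
    rw [hcA]
    push_cast
    have h1' := hc1
    have h2' := hc2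
    omega
  -- mode existence
  have hIne : I.Nonempty := by
    rw [hI, Finset.nonempty_Ico]; omega
  have hmode : ∀ t : ℤ, |t| ≤ X →
      ∃ v : ℚ, 873 * X ≤ ((I.filter fun y => g (t + y) - g y = v).card : ℤ) := by
    intro t ht
    obtain ⟨y₀, hy₀, hmax⟩ := Finset.exists_max_image I
      (fun y => ((I.filter fun z => g (t + y) - g y = g (t + z) - g z).card)) hIne
    refine ⟨g (t + y₀) - g y₀, ?_⟩
    have hsplit : (((I ×ˢ I).filter fun p : ℤ×ℤ => g (t + p.1) - g p.1 = g (t + p.2) - g p.2).card)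
        + (((I ×ˢ I).filter fun p : ℤ×ℤ => ¬(g (t + p.1) - g p.1 = g (t + p.2) - g p.2)).card)
        = I.card * I.card := by
      rw [Finset.card_filter_add_card_filter_not, Finset.card_product]
    have hneg : (((I ×ˢ I).filter fun p : ℤ×ℤ =>
        ¬(g (t + p.1) - g p.1 = g (t + p.2) - g p.2)).card : ℤ) ≤ 2 * cA := by
      have hcr := cross t 0 ht (by rw [abs_zero]; omega)
      have hcongr : ((I ×ˢ I).filter fun p : ℤ×ℤ =>
            g (t + (0 + p.1)) - g (0 + p.1) ≠ g (t + p.2) - g p.2)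
          = ((I ×ˢ I).filter fun p : ℤ×ℤ => ¬(g (t + p.1) - g p.1 = g (t + p.2) - g p.2)) := by
        apply Finset.filter_congr
        intro p hp
        rw [zero_add]
      rwa [hcongr] at hcr
    have hpos : (((I ×ˢ I).filter fun p : ℤ×ℤ => g (t + p.1) - g p.1 = g (t + p.2) - g p.2).card)
        ≤ I.card * ((I.filter fun z => g (t + y₀) - g y₀ = g (t + z) - g z).card) := by
      rw [Finset.card_filter, Finset.sum_product]
      calc (∑ y ∈ I, ∑ z ∈ I, if g (t + y) - g y = g (t + z) - g z then 1 else 0)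
          = ∑ y ∈ I, ((I.filter fun z => g (t + y) - g y = g (t + z) - g z).card) := by
            refine Finset.sum_congr rfl fun y hy => ?_
            rw [Finset.card_filter]
        _ ≤ ∑ y ∈ I, ((I.filter fun z => g (t + y₀) - g y₀ = g (t + z) - g z).card) :=
            Finset.sum_le_sum fun y hy => hmax y hy
        _ = I.card * _ := by rw [Finset.sum_const, smul_eq_mul]
    have horient : (I.filter fun z => g (t + y₀) - g y₀ = g (t + z) - g z)
        = (I.filter fun y => g (t + y) - g y = g (t + y₀) - g y₀) := by
      apply Finset.filter_congr
      intro z hz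
      exact eq_comm
    rw [horient] at hpos
    set F : ℤ := ((I.filter fun y => g (t + y) - g y = g (t + y₀) - g y₀).card : ℤ) with hF
    have hF0 : 0 ≤ F := Int.natCast_nonneg _
    have hkey : N * N ≤ N * F + 2 * cA := by
      have hcast : (N : ℤ) * N = ((I.card * I.card : ℕ) : ℤ) := by push_cast; rw [hIcard]
      rw [hcast, ← hsplit]
      push_cast
      have hposZ := (Nat.cast_le (α := ℤ)).mpr hpos
      push_cast at hposZ
      rw [hIcard, ← hF] at hposZ
      linarith
    -- N = 1000 X: 10^6 X^2 ≤ 1000 X F + 126002 X^2  =>  F ≥ 873 X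
    by_contra hcon
    push_neg at hcon
    have hFle : F ≤ 873 * X - 1 := by omega
    have h1 : N * F ≤ N * (873 * X - 1) :=
      mul_le_mul_of_nonneg_left hFle (by omega)
    rw [hN] at hkey h1
    nlinarith [sq_nonneg X, hXpos]
  -- the decoded function
  set m : ℤ → ℚ := fun t =>
    if h : ∃ v : ℚ, 873 * X ≤ ((I.filter fun y => g (t + y) - g y = v).card : ℤ)
    then h.choose else 0 with hm_def
  have hm : ∀ t : ℤ, |t| ≤ X →
      873 * X ≤ ((I.filter fun y => g (t + y) - g y = m t).card : ℤ) := by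
    intro t ht
    have h := hmode t ht
    rw [hm_def]
    simp only [dif_pos h]
    exact h.choose_spec
  -- complement of mode set is small
  have hcompl : ∀ t : ℤ, |t| ≤ X →
      ((I.filter fun y => ¬ (g (t + y) - g y = m t)).card : ℤ) ≤ 127 * X := by
    intro t ht
    have hfib := hm t ht
    have hsplit := Finset.card_filter_add_card_filter_not
      (s := I) (p := fun y => g (t + y) - g y = m t)
    have : ((I.filter fun y => g (t + y) - g y = m t).card : ℤ)
        + ((I.filter fun y => ¬ (g (t + y) - g y = m t)).card : ℤ) = N := by
      rw [← hIcard]; exact_mod_cast hsplit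
    omega
  -- additivity of m
  have hadd : ∀ t1 t2 : ℤ, |t1| ≤ X → |t2| ≤ X → |t1 + t2| ≤ X →
      m (t1 + t2) = m t1 + m t2 := by
    intro t1 t2 h1 h2 h12
    set A1 : Finset ℤ := I.filter (fun y => ¬ (g ((t1 + t2) + y) - g y = m (t1 + t2))) with hA1
    set A2 : Finset ℤ := I.filter (fun y => ¬ (g (t2 + y) - g y = m t2)) with hA2
    set A3 : Finset ℤ := I.filter (fun y => ¬ (g (t1 + (t2 + y)) - g (t2 + y) = m t1)) with hA3
    have hA1card : (A1.card : ℤ) ≤ 127 * X := hcompl (t1 + t2) h12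
    have hA2card : (A2.card : ℤ) ≤ 127 * X := hcompl t2 h2
    have hA3card : (A3.card : ℤ) ≤ 145 * X := by
      have hcr := cross t1 t2 h1 h2
      have hfib := hm t1 h1
      have hsub : A3 ×ˢ (I.filter fun z => g (t1 + z) - g z = m t1)
          ⊆ (I ×ˢ I).filter (fun p : ℤ×ℤ =>
            g (t1 + (t2 + p.1)) - g (t2 + p.1) ≠ g (t1 + p.2) - g p.2) := by
        intro p hp
        rw [mem_product] at hp
        have hp1 := hp.1
        have hp2 := hp.2
        rw [hA3, mem_filter] at hp1
        rw [mem_filter] at hp2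
        rw [mem_filter, mem_product]
        refine ⟨⟨hp1.1, hp2.1⟩, ?_⟩
        rw [hp2.2]
        exact hp1.2
      have hcard := Finset.card_le_card hsub
      rw [Finset.card_product] at hcard
      have hcardZ : (A3.card : ℤ) * ((I.filter fun z => g (t1 + z) - g z = m t1).card : ℤ)
          ≤ 2 * cA := by
        calc (A3.card : ℤ) * ((I.filter fun z => g (t1 + z) - g z = m t1).card : ℤ)
            = ((A3.card * (I.filter fun z => g (t1 + z) - g z = m t1).card : ℕ) : ℤ) := by
              push_cast; ring
          _ ≤ _ := le_trans (by exact_mod_cast hcard) hcr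
      have hA30 : (0:ℤ) ≤ (A3.card : ℤ) := Int.natCast_nonneg _
      by_contra hcon
      push_neg at hcon
      have hge : 145 * X + 1 ≤ (A3.card : ℤ) := by omega
      have : (145 * X + 1) * (873 * X) ≤ 2 * cA := by
        calc (145 * X + 1) * (873 * X)
            ≤ (A3.card : ℤ) * ((I.filter fun z => g (t1 + z) - g z = m t1).card : ℤ) := by
              apply mul_le_mul hge hfib (by positivity) (by omega)
          _ ≤ 2 * cA := hcardZ
      nlinarith [sq_nonneg X, hXpos]
    -- find good y
    have hU : ((A1 ∪ A2 ∪ A3).card : ℤ) < (I.card : ℤ) := by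
      have h12' := Finset.card_union_le (A1 ∪ A2) A3
      have h1' := Finset.card_union_le A1 A2
      have : ((A1 ∪ A2 ∪ A3).card : ℤ) ≤ (A1.card : ℤ) + A2.card + A3.card := by
        exact_mod_cast le_trans h12' (by omega)
      rw [hIcard]
      omega
    have hnsub : ¬ I ⊆ A1 ∪ A2 ∪ A3 := by
      intro hsub'
      exact absurd (Nat.cast_le.mpr (Finset.card_le_card hsub') : ((I.card : ℤ) ≤ _)) (not_le.mpr hU)
    obtain ⟨y, hy⟩ := Finset.sdiff_nonempty.mpr hnsub
    rw [Finset.mem_sdiff] at hy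
    obtain ⟨hyI, hyU⟩ := hy
    rw [Finset.mem_union, Finset.mem_union] at hyU
    push_neg at hyU
    have e1 : g ((t1 + t2) + y) - g y = m (t1 + t2) := by
      by_contra hcon
      exact hyU.1.1 (by rw [hA1, mem_filter]; exact ⟨hyI, hcon⟩)
    have e2 : g (t2 + y) - g y = m t2 := by
      by_contra hcon
      exact hyU.1.2 (by rw [hA2, mem_filter]; exact ⟨hyI, hcon⟩)
    have e3 : g (t1 + (t2 + y)) - g (t2 + y) = m t1 := by
      by_contra hcon
      exact hyU.2 (by rw [hA3, mem_filter]; exact ⟨hyI, hcon⟩)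
    rw [show t1 + (t2 + y) = (t1 + t2) + y by ring] at e3
    linarith
  -- tie-in: m agrees with g at tame points
  have htie : ∀ t : ℤ, |t| ≤ X →
      2 * (((I.filter fun y => g (y + t) - g y - g t ≠ 0)).card : ℤ) ≤ N → m t = g t := by
    intro t ht hbad
    have hfib := hm t ht
    set G : Finset ℤ := I.filter (fun y => ¬ (g (y + t) - g y - g t ≠ 0)) with hG
    have hGcard : 500 * X ≤ (G.card : ℤ) := by
      have hsplit := Finset.card_filter_add_card_filter_not
        (s := I) (p := fun y => g (y + t) - g y - g t ≠ 0)
      have : ((I.filter fun y => g (y + t) - g y - g t ≠ 0).card : ℤ) + (G.card : ℤ) = N := by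
        rw [← hIcard]; rw [hG]; exact_mod_cast hsplit
      omega
    set Fs : Finset ℤ := I.filter (fun y => g (t + y) - g y = m t) with hFs
    have hinter : (G ∩ Fs).Nonempty := by
      rw [← Finset.card_pos]
      have hcui := Finset.card_union_add_card_inter G Fs
      have hsubI : G ∪ Fs ⊆ I := by
        apply Finset.union_subset
        · rw [hG]; exact Finset.filter_subset _ _
        · rw [hFs]; exact Finset.filter_subset _ _
      have hle : ((G ∪ Fs).card : ℤ) ≤ N := by
        rw [← hIcard]; exact_mod_cast Finset.card_le_card hsubI
      have : ((G ∪ Fs).card : ℤ) + ((G ∩ Fs).card : ℤ) = (G.card : ℤ) + (Fs.card : ℤ) := by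
        exact_mod_cast hcui
      have hpos : (0:ℤ) < ((G ∩ Fs).card : ℤ) := by omega
      exact_mod_cast hpos
    obtain ⟨y, hy⟩ := hinter
    rw [Finset.mem_inter] at hy
    have hy1 := hy.1
    have hy2 := hy.2
    rw [hG, mem_filter, not_not] at hy1
    rw [hFs, mem_filter] at hy2
    have : g (y + t) - g y - g t = 0 := hy1.2
    rw [show y + t = t + y by ring] at this
    rw [← hy2.2]
    linarith
  -- m is linear
  have h0X : |(0:ℤ)| ≤ X := by rw [abs_zero]; omega
  have h1X : |(1:ℤ)| ≤ X := by rw [abs_one]; omega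
  have hm0 : m 0 = 0 := by
    have := hadd 0 0 h0X h0X (by rw [add_zero]; exact h0X)
    rw [add_zero] at this
    linarith
  have hnat : ∀ k : ℕ, (k : ℤ) ≤ X → m (k : ℤ) = (k : ℚ) * m 1 := by
    intro k
    induction k with
    | zero => intro _; push_cast; rw [hm0]; ring
    | succ k ih =>
      intro hk1
      push_cast at hk1
      have hk : (k : ℤ) ≤ X := by omega
      have habsk : |(k:ℤ)| ≤ X := by rw [abs_of_nonneg (Int.natCast_nonneg k)]; omega
      have habsk1 : |(k:ℤ) + 1| ≤ X := by
        rw [abs_of_nonneg (by positivity)]; omega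
      have := hadd (k:ℤ) 1 habsk h1X habsk1
      rw [ih hk] at this
      push_cast
      rw [this]
      ring
  have hmx : m x = (x : ℚ) * m 1 := by
    rcases le_or_gt 0 x with hx0 | hx0
    · obtain ⟨k, rfl⟩ := Int.eq_ofNat_of_zero_le hx0
      have : (k : ℤ) ≤ X := by
        rw [abs_of_nonneg (Int.natCast_nonneg k)] at hxX; exact hxX
      exact_mod_cast hnat k this
    · have hnegX : |(-x)| ≤ X := by rwa [abs_neg]
      have hsum := hadd x (-x) hxX hnegX (by rw [add_neg_cancel]; exact h0X)
      rw [add_neg_cancel, hm0] at hsum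
      obtain ⟨k, hk⟩ := Int.eq_ofNat_of_zero_le (by omega : (0:ℤ) ≤ -x)
      have hkX : (k : ℤ) ≤ X := by
        rw [← hk]; rw [abs_of_nonpos (by omega)] at hxX; omega
      have := hnat k hkX
      rw [← hk] at this
      have hxq : (x : ℚ) = -(k : ℚ) := by
        have h' : ((-x : ℤ) : ℚ) = ((k : ℕ) : ℚ) := by exact_mod_cast congrArg (fun z : ℤ => (z : ℚ)) hk
        push_cast at h'
        linarith
      rw [hxq]
      linarith [hsum, this]
  have hm1 : m 1 = g 1 := htie 1 h1X H1
  have hmxg : m x = g x := htie x hxX Hx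
  rw [← hmxg, hmx, hm1, hg1, mul_zero]


private lemma wH_eq_card {n : ℕ} (v : Fin n → ℚ) :
    wH v = (Finset.univ.filter fun i => v i ≠ 0).card := by
  classical
  rw [wH, Nat.card_eq_fintype_card]
  exact Fintype.card_subtype _

theorem main_theorem (c : ℕ) {n : ℕ} (f : ℤ → Fin n → ℚ)
    (hf : ∀ x y : ℤ, wH (f (x + y) - f x - f y) ≤ c) :
    ∀ x : ℤ, wH (f x - x • f 1) ≤ 28 * c := by
  classical
  intro x
  set X : ℤ := |x| + 1 with hXdef
  have hX : 1 ≤ X := by have := abs_nonneg x; omega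
  have hxX : |x| ≤ X := by omega
  set N : ℤ := 1000 * X with hNdef
  set D : ℤ → Fin n → ℚ := fun t i => f t i - (t : ℚ) * f 1 i with hD
  have hDcoord : ∀ a b : ℤ, ∀ i : Fin n,
      D (a + b) i - D a i - D b i = (f (a + b) - f a - f b) i := by
    intro a b i
    simp only [hD, Pi.sub_apply]
    push_cast
    ring
  have hwHc : ∀ a b : ℤ,
      ((Finset.univ.filter fun i : Fin n => D (a + b) i - D a i - D b i ≠ 0).card) ≤ c := by
    intro a b
    have he : (Finset.univ.filter fun i : Fin n => D (a + b) i - D a i - D b i ≠ 0)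
        = (Finset.univ.filter fun i : Fin n => (f (a + b) - f a - f b) i ≠ 0) := by
      apply Finset.filter_congr
      intro i _
      rw [hDcoord a b i]
    rw [he, ← wH_eq_card]
    exact hf a b
  -- families
  set J : Finset ℤ := Finset.Ico (N - 2*X) (2*N + 2*X) with hJ
  set I : Finset ℤ := Finset.Ico N (2*N) with hI
  have hJcard : (J.card : ℤ) = N + 4*X := by
    rw [hJ, Int.card_Ico_of_le (N - 2*X) (2*N + 2*X) (by omega)]; ring
  have hIcard : (I.card : ℤ) = N := by
    rw [hI, Int.card_Ico_of_le N (2*N) (by omega)]; ring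
  -- per-coordinate counts
  set cntA : Fin n → ℕ := fun i =>
    ((J ×ˢ J).filter (fun p => D (p.1 + p.2) i - D p.1 i - D p.2 i ≠ 0)).card with hcntA
  set cnt1 : Fin n → ℕ := fun i =>
    (I.filter fun y => D (y + 1) i - D y i - D 1 i ≠ 0).card with hcnt1
  set cntx : Fin n → ℕ := fun i =>
    (I.filter fun y => D (y + x) i - D y i - D x i ≠ 0).card with hcntx
  -- budgets
  have hbudgetA : ∑ i : Fin n, cntA i ≤ c * (J ×ˢ J).card := by
    have h1 : ∑ i : Fin n, cntA i
        = ∑ p ∈ J ×ˢ J, ((Finset.univ.filter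
            fun i : Fin n => D (p.1 + p.2) i - D p.1 i - D p.2 i ≠ 0).card) := by
      simp only [hcntA, Finset.card_filter]
      rw [Finset.sum_comm]
    rw [h1]
    calc ∑ p ∈ J ×ˢ J, ((Finset.univ.filter
            fun i : Fin n => D (p.1 + p.2) i - D p.1 i - D p.2 i ≠ 0).card)
        ≤ ∑ _p ∈ J ×ˢ J, c := Finset.sum_le_sum fun p _ => hwHc p.1 p.2
      _ = c * (J ×ˢ J).card := by rw [Finset.sum_const, smul_eq_mul, mul_comm]
  have hbudget1 : ∑ i : Fin n, cnt1 i ≤ c * I.card := by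
    have h1 : ∑ i : Fin n, cnt1 i
        = ∑ y ∈ I, ((Finset.univ.filter
            fun i : Fin n => D (y + 1) i - D y i - D 1 i ≠ 0).card) := by
      simp only [hcnt1, Finset.card_filter]
      rw [Finset.sum_comm]
    rw [h1]
    calc ∑ y ∈ I, ((Finset.univ.filter
            fun i : Fin n => D (y + 1) i - D y i - D 1 i ≠ 0).card)
        ≤ ∑ _y ∈ I, c := Finset.sum_le_sum fun y _ => hwHc y 1
      _ = c * I.card := by rw [Finset.sum_const, smul_eq_mul, mul_comm]
  have hbudgetx : ∑ i : Fin n, cntx i ≤ c * I.card := by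
    have h1 : ∑ i : Fin n, cntx i
        = ∑ y ∈ I, ((Finset.univ.filter
            fun i : Fin n => D (y + x) i - D y i - D x i ≠ 0).card) := by
      simp only [hcntx, Finset.card_filter]
      rw [Finset.sum_comm]
    rw [h1]
    calc ∑ y ∈ I, ((Finset.univ.filter
            fun i : Fin n => D (y + x) i - D y i - D x i ≠ 0).card)
        ≤ ∑ _y ∈ I, c := Finset.sum_le_sum fun y _ => hwHc y x
      _ = c * I.card := by rw [Finset.sum_const, smul_eq_mul, mul_comm]
  -- bad sets
  set M2 : ℤ := (N + 4*X)^2 with hM2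
  set BadA : Finset (Fin n) := Finset.univ.filter (fun i => ¬ (16 * (cntA i : ℤ) ≤ M2)) with hBadA
  set Bad1 : Finset (Fin n) := Finset.univ.filter (fun i => ¬ (2 * (cnt1 i : ℤ) ≤ N)) with hBad1
  set Badx : Finset (Fin n) := Finset.univ.filter (fun i => ¬ (2 * (cntx i : ℤ) ≤ N)) with hBadx
  have hJJcard : (((J ×ˢ J).card : ℕ) : ℤ) = M2 := by
    rw [Finset.card_product]
    push_cast
    rw [hJcard, hM2]
    ring
  have hBadAcard : (BadA.card : ℤ) ≤ 16 * c := by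
    have hlow : ∀ i ∈ BadA, M2 + 1 ≤ 16 * (cntA i : ℤ) := by
      intro i hi
      rw [hBadA, Finset.mem_filter] at hi
      omega
    have hsum1 : (BadA.card : ℤ) * (M2 + 1) ≤ ∑ i ∈ BadA, 16 * (cntA i : ℤ) := by
      calc (BadA.card : ℤ) * (M2 + 1) = ∑ _i ∈ BadA, (M2 + 1) := by
            rw [Finset.sum_const, nsmul_eq_mul]
        _ ≤ _ := Finset.sum_le_sum hlow
    have hsum2 : ∑ i ∈ BadA, 16 * (cntA i : ℤ) ≤ 16 * (c : ℤ) * M2 := by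
      have h1 : ∑ i ∈ BadA, (cntA i : ℤ) ≤ ∑ i : Fin n, (cntA i : ℤ) :=
        Finset.sum_le_sum_of_subset_of_nonneg (Finset.subset_univ _)
          (fun i _ _ => Int.natCast_nonneg _)
      have h2 : ∑ i : Fin n, (cntA i : ℤ) ≤ (c : ℤ) * M2 := by
        rw [← hJJcard]
        calc ∑ i : Fin n, (cntA i : ℤ) = ((∑ i : Fin n, cntA i : ℕ) : ℤ) := by push_cast; ring
          _ ≤ ((c * (J ×ˢ J).card : ℕ) : ℤ) := by exact_mod_cast hbudgetA
          _ = (c : ℤ) * ((J ×ˢ J).card : ℤ) := by push_cast; ring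
      calc ∑ i ∈ BadA, 16 * (cntA i : ℤ) = 16 * ∑ i ∈ BadA, (cntA i : ℤ) := by
            rw [Finset.mul_sum]
        _ ≤ 16 * ((c:ℤ) * M2) := by
            have := le_trans h1 h2
            linarith
        _ = 16 * (c : ℤ) * M2 := by ring
    have hM2pos : 0 ≤ M2 := by positivity
    nlinarith [Int.natCast_nonneg (BadA.card), Int.natCast_nonneg c]
  have hsmallbad : ∀ (cnt : Fin n → ℕ) (Bad : Finset (Fin n)),
      Bad = Finset.univ.filter (fun i => ¬ (2 * (cnt i : ℤ) ≤ N)) →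
      (∑ i : Fin n, cnt i ≤ c * I.card) → (Bad.card : ℤ) ≤ 2 * c := by
    intro cnt Bad hBad hbudget
    have hlow : ∀ i ∈ Bad, N + 1 ≤ 2 * (cnt i : ℤ) := by
      intro i hi
      rw [hBad, Finset.mem_filter] at hi
      omega
    have hsum1 : (Bad.card : ℤ) * (N + 1) ≤ ∑ i ∈ Bad, 2 * (cnt i : ℤ) := by
      calc (Bad.card : ℤ) * (N + 1) = ∑ _i ∈ Bad, (N + 1) := by
            rw [Finset.sum_const, nsmul_eq_mul]
        _ ≤ _ := Finset.sum_le_sum hlow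
    have hsum2 : ∑ i ∈ Bad, 2 * (cnt i : ℤ) ≤ 2 * (c : ℤ) * N := by
      have h1 : ∑ i ∈ Bad, (cnt i : ℤ) ≤ ∑ i : Fin n, (cnt i : ℤ) :=
        Finset.sum_le_sum_of_subset_of_nonneg (Finset.subset_univ _)
          (fun i _ _ => Int.natCast_nonneg _)
      have h2 : ∑ i : Fin n, (cnt i : ℤ) ≤ (c : ℤ) * N := by
        rw [← hIcard]
        calc ∑ i : Fin n, (cnt i : ℤ) = ((∑ i : Fin n, cnt i : ℕ) : ℤ) := by push_cast; ring
          _ ≤ ((c * I.card : ℕ) : ℤ) := by exact_mod_cast hbudget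
          _ = (c : ℤ) * (I.card : ℤ) := by push_cast; ring
      calc ∑ i ∈ Bad, 2 * (cnt i : ℤ) = 2 * ∑ i ∈ Bad, (cnt i : ℤ) := by rw [Finset.mul_sum]
        _ ≤ 2 * ((c:ℤ) * N) := by
            have := le_trans h1 h2
            linarith
        _ = 2 * (c : ℤ) * N := by ring
    have hNpos : 0 < N := by omega
    nlinarith [Int.natCast_nonneg (Bad.card), Int.natCast_nonneg c]
  have hBad1card : (Bad1.card : ℤ) ≤ 2 * c := hsmallbad cnt1 Bad1 hBad1 hbudget1
  have hBadxcard : (Badx.card : ℤ) ≤ 2 * c := hsmallbad cntx Badx hBadx hbudgetx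
  -- the support of f x - x • f 1 is inside the bad sets
  have hsubset : (Finset.univ.filter fun i : Fin n => (f x - x • f 1) i ≠ 0)
      ⊆ BadA ∪ Bad1 ∪ Badx := by
    intro i hi
    rw [Finset.mem_filter] at hi
    by_contra hu
    rw [Finset.mem_union, Finset.mem_union] at hu
    push_neg at hu
    have hiA : 16 * (cntA i : ℤ) ≤ M2 := by
      by_contra hcon
      exact hu.1.1 (by rw [hBadA, Finset.mem_filter]; exact ⟨Finset.mem_univ i, hcon⟩)
    have hi1 : 2 * (cnt1 i : ℤ) ≤ N := by
      by_contra hcon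
      exact hu.1.2 (by rw [hBad1, Finset.mem_filter]; exact ⟨Finset.mem_univ i, hcon⟩)
    have hix : 2 * (cntx i : ℤ) ≤ N := by
      by_contra hcon
      exact hu.2 (by rw [hBadx, Finset.mem_filter]; exact ⟨Finset.mem_univ i, hcon⟩)
    have hg1 : (fun t => D t i) 1 = 0 := by
      simp only [hD]
      push_cast
      ring
    have hzero : (fun t => D t i) x = 0 := by
      apply percoord (fun t => D t i) x X N hX hxX hNdef ?_ ?_ ?_ hg1
      · rw [hM2] at hiA
        exact_mod_cast hiA
      · exact_mod_cast hi1
      · exact_mod_cast hix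
    apply hi.2
    have : D x i = 0 := hzero
    rw [hD] at this
    have heq : (f x - x • f 1) i = f x i - (x:ℚ) * f 1 i := by
      simp [Pi.smul_apply, zsmul_eq_mul]
    rw [heq]
    exact this
  rw [wH_eq_card]
  have hfinal := Finset.card_le_card hsubset
  have hu1 := Finset.card_union_le (BadA ∪ Bad1) Badx
  have hu2 := Finset.card_union_le BadA Bad1
  have h20 : ((BadA ∪ Bad1 ∪ Badx).card : ℤ) ≤ 20 * c := by
    have : ((BadA ∪ Bad1 ∪ Badx).card : ℕ) ≤ BadA.card + Bad1.card + Badx.card := by omega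
    have := (Nat.cast_le (α := ℤ)).mpr this
    push_cast at this
    linarith
  have : ((Finset.univ.filter fun i : Fin n => (f x - x • f 1) i ≠ 0).card : ℤ) ≤ 28 * c := by
    have := (Nat.cast_le (α := ℤ)).mpr hfinal
    have hc0 : (0:ℤ) ≤ (c:ℤ) := Int.natCast_nonneg c
    linarith
  exact_mod_cast this
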